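/- Let k ≥ 3 be an integer, let A = {0,1}^k \ {0^k, 1^k}, define λ = (k^k + (-k/(k-1))^k)/((2k-2)^k - 2(k-2)^k + (-2)^k) and for a ∈ A define π(a) = (k-1)^k/((2k-2)^k - 2(k-2)^k + (-2)^k) · (1 - (-1/(k-1))^{d(a,0^k)}) · (1 - (-1/(k-1))^{d(a,1^k)}). Then ∑_{a∈A} π(a) = 1, π(a) ≥ 0 for all a ∈ A, and for every a* ∈ A, ∑_{a∈A} π(a)·(1/(k-1))^{d(a,a*)} = λ. -/

import Mathlib

lemma pow_ham {k : ℕ} (t : ℝ) (a b : Fin k → Bool) :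
    t ^ hammingDist a b = ∏ i, (if a i = b i then 1 else t) := by
  rw [hammingDist, Finset.prod_ite, Finset.prod_const, Finset.prod_const, one_pow, one_mul]

lemma master3 {k : ℕ} (t s u : ℝ) (b c e : Fin k → Bool) :
    ∑ a : Fin k → Bool,
      t ^ hammingDist a b * s ^ hammingDist a c * u ^ hammingDist a e
    = ∏ i, ((if false = b i then 1 else t) * (if false = c i then 1 else s) * (if false = e i then 1 else u)
          + (if true = b i then 1 else t) * (if true = c i then 1 else s) * (if true = e i then 1 else u)) := by
  simp_rw [pow_ham, ← Finset.prod_mul_distrib]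
  rw [← Fintype.piFinset_univ,
    Finset.sum_prod_piFinset Finset.univ
      (fun i x => ((if x = b i then 1 else t) * if x = c i then 1 else s) * if x = e i then 1 else u)]
  refine Finset.prod_congr rfl fun i _ => ?_
  rw [Fintype.sum_bool]
  exact add_comm _ _

theorem stmt_3 (k : ℕ) (hk : 3 ≤ k)
    (A : Finset (Fin k → Bool))
    (hA : A = Finset.univ.filter fun a => a ≠ (fun _ => false) ∧ a ≠ (fun _ => true))
    (D lam : ℝ)
    (hD : D = (2 * (k : ℝ) - 2) ^ k - 2 * ((k : ℝ) - 2) ^ k + (-2) ^ k)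
    (hlam : lam = ((k : ℝ) ^ k + (-(k : ℝ) / ((k : ℝ) - 1)) ^ k) / D)
    (π : (Fin k → Bool) → ℝ)
    (hπ : ∀ a, π a = ((k : ℝ) - 1) ^ k / D *
      (1 - (-1 / ((k : ℝ) - 1)) ^ (hammingDist a (fun _ => false))) *
      (1 - (-1 / ((k : ℝ) - 1)) ^ (hammingDist a (fun _ => true)))) :
    (∑ a ∈ A, π a = 1) ∧ (∀ a ∈ A, 0 ≤ π a) ∧
      (∀ astar ∈ A, ∑ a ∈ A, π a * (1 / ((k : ℝ) - 1)) ^ (hammingDist a astar) = lam) := by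
  set K : ℝ := (k : ℝ) with hK
  set z : Fin k → Bool := fun _ => false with hz
  set o : Fin k → Bool := fun _ => true with ho
  set t : ℝ := -1 / (K - 1) with ht
  set u : ℝ := 1 / (K - 1) with hu
  set C : ℝ := (K - 1) ^ k / D with hC
  have hK3 : (3 : ℝ) ≤ K := by rw [hK]; exact_mod_cast hk
  have hK1 : (0 : ℝ) < K - 1 := by linarith
  have hK1ne : K - 1 ≠ 0 := ne_of_gt hK1
  -- D > 0
  have hnat : 2 * (k - 2) ^ k + 2 ^ k < 2 ^ k * (k - 1) ^ k := by
    have h1 : (k - 2) ^ k < (k - 1) ^ k := Nat.pow_lt_pow_left (by omega) (by omega)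
    have h8 : 8 ≤ 2 ^ k := by calc (8:ℕ) = 2 ^ 3 := by norm_num
                                  _ ≤ 2 ^ k := Nat.pow_le_pow_right (by norm_num) hk
    have hp1 : 1 ≤ (k - 2) ^ k := Nat.one_le_pow _ _ (by omega)
    nlinarith
  have hcast : 2 * (K - 2) ^ k + 2 ^ k < 2 ^ k * (K - 1) ^ k := by
    have e2 : (K - 2) = ((k - 2 : ℕ) : ℝ) := by
      rw [Nat.cast_sub (by omega)]; norm_num; exact hK
    have e1 : (K - 1) = ((k - 1 : ℕ) : ℝ) := by
      rw [Nat.cast_sub (by omega)]; norm_num; exact hK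
    rw [e1, e2]
    exact_mod_cast hnat
  have hDpos : 0 < D := by
    have hneg : -(2 : ℝ) ^ k ≤ (-2 : ℝ) ^ k := by
      have := neg_abs_le ((-2 : ℝ) ^ k)
      rwa [abs_pow, abs_neg, abs_two] at this
    have h2 : (2 * K - 2) ^ k = 2 ^ k * (K - 1) ^ k := by
      rw [← mul_pow]; ring_nf
    rw [hD, h2]
    linarith
  have hDne : D ≠ 0 := ne_of_gt hDpos
  -- π vanishes on constants
  have hπz : π z = 0 := by simp [hπ, hammingDist_self]
  have hπo : π o = 0 := by simp [hπ, hammingDist_self]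
  -- sum over A = sum over univ
  have hAsum : ∀ g : (Fin k → Bool) → ℝ, g z = 0 → g o = 0 →
      ∑ a ∈ A, g a = ∑ a : Fin k → Bool, g a := by
    intro g hgz hgo
    rw [hA, Finset.sum_filter]
    refine Finset.sum_congr rfl fun a _ => ?_
    by_cases h1 : a = z
    · subst h1; simp [hgz]
    · by_cases h2 : a = o
      · subst h2; simp [hgo]
      · simp [h1, h2]
  -- key decomposition of the weighted sum
  have key : ∀ (v : ℝ) (e : Fin k → Bool),
      ∑ a : Fin k → Bool, π a * v ^ hammingDist a e
      = C * ((∑ a : Fin k → Bool, (1:ℝ) ^ hammingDist a z * 1 ^ hammingDist a o * v ^ hammingDist a e)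
           - (∑ a : Fin k → Bool, t ^ hammingDist a z * 1 ^ hammingDist a o * v ^ hammingDist a e)
           - (∑ a : Fin k → Bool, (1:ℝ) ^ hammingDist a z * t ^ hammingDist a o * v ^ hammingDist a e)
           + (∑ a : Fin k → Bool, t ^ hammingDist a z * t ^ hammingDist a o * v ^ hammingDist a e)) := by
    intro v e
    rw [← Finset.sum_sub_distrib, ← Finset.sum_sub_distrib, ← Finset.sum_add_distrib,
      Finset.mul_sum]
    refine Finset.sum_congr rfl fun a _ => ?_
    rw [hπ a]
    simp only [one_pow]
    ring
  -- evaluations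
  have hpne : (K - 1) ^ k ≠ 0 := pow_ne_zero _ hK1ne
  -- Part 1
  have part1 : ∑ a ∈ A, π a = 1 := by
    have h := key 1 z
    rw [master3, master3, master3, master3] at h
    simp only [hz, ho, if_pos rfl, one_pow, mul_one, one_mul] at h
    norm_num at h
    rw [hAsum π hπz hπo, h]
    have e1 : (1:ℝ) + t = (K - 2) / (K - 1) := by rw [ht]; field_simp; ring
    have e1' : t + 1 = (K - 2) / (K - 1) := by rw [add_comm]; exact e1
    have e2 : t + t = -2 / (K - 1) := by rw [ht]; ring
    have h2 : (2 * K - 2) ^ k = 2 ^ k * (K - 1) ^ k := by rw [← mul_pow]; ring_nf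
    rw [e1, e1', e2, div_pow, div_pow]
    have hb : (2:ℝ) ^ k - (K - 2) ^ k / (K - 1) ^ k - (K - 2) ^ k / (K - 1) ^ k
        + (-2) ^ k / (K - 1) ^ k = D / (K - 1) ^ k := by
      rw [hD, h2]; field_simp; ring
    rw [hb, hC, div_mul_div_comm, mul_comm]
    exact div_self (mul_ne_zero hDne hpne)
  -- Part 2
  have hpowle : ∀ n : ℕ, t ^ n ≤ 1 := by
    intro n
    have habs : |t| ≤ 1 := by
      rw [ht, abs_div, abs_neg, abs_one, abs_of_pos hK1, div_le_one hK1]; linarith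
    calc t ^ n ≤ |t ^ n| := le_abs_self _
      _ = |t| ^ n := abs_pow _ _
      _ ≤ 1 := pow_le_one₀ (abs_nonneg _) habs
  have part2 : ∀ a ∈ A, 0 ≤ π a := by
    intro a _
    rw [hπ a]
    have hC0 : 0 ≤ C := div_nonneg (pow_nonneg (by linarith) _) hDpos.le
    have f1 : 0 ≤ 1 - t ^ hammingDist a z := by linarith [hpowle (hammingDist a z)]
    have f2 : 0 ≤ 1 - t ^ hammingDist a o := by linarith [hpowle (hammingDist a o)]
    exact mul_nonneg (mul_nonneg hC0 f1) f2
  -- Part 3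
  refine ⟨part1, part2, ?_⟩
  intro astar hastar
  rw [hA, Finset.mem_filter] at hastar
  obtain ⟨-, hne1, hne2⟩ := hastar
  obtain ⟨i1, hi1⟩ : ∃ i, astar i = true := by
    by_contra hcon; push_neg at hcon
    simp only [Bool.not_eq_true] at hcon
    exact hne1 (funext hcon)
  obtain ⟨i2, hi2⟩ : ∃ i, astar i = false := by
    by_contra hcon; push_neg at hcon
    simp only [Bool.not_eq_false] at hcon
    exact hne2 (funext hcon)
  have h := key u astar
  rw [master3, master3, master3, master3] at h
  simp only [hz, ho, if_pos rfl, one_pow, mul_one, one_mul] at h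
  norm_num at h
  have P1 : (∏ x : Fin k, ((if astar x = false then (1:ℝ) else u) + if astar x = true then 1 else u))
      = (1 + u) ^ k := by
    have hc : ∀ i ∈ Finset.univ, ((if astar i = false then (1:ℝ) else u) + if astar i = true then 1 else u) = 1 + u := by
      intro i _; cases hai : astar i <;> simp [hai] <;> ring
    rw [Finset.prod_congr rfl hc, Finset.prod_const, Finset.card_univ, Fintype.card_fin]
  have P2 : (∏ x : Fin k, ((if astar x = false then (1:ℝ) else u) + if astar x = true then t else t * u))
      = 0 := by
    refine Finset.prod_eq_zero (Finset.mem_univ i1) ?_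
    simp only [hi1]; norm_num; rw [hu, ht]; ring
  have P3 : (∏ x : Fin k, ((if astar x = false then t else t * u) + if astar x = true then (1:ℝ) else u))
      = 0 := by
    refine Finset.prod_eq_zero (Finset.mem_univ i2) ?_
    simp only [hi2]; norm_num; rw [hu, ht]; ring
  have P4 : (∏ x : Fin k, ((if astar x = false then t else t * u) + if astar x = true then t else t * u))
      = (t + t * u) ^ k := by
    have hc : ∀ i ∈ Finset.univ, ((if astar i = false then t else t * u) + if astar i = true then t else t * u) = t + t * u := by
      intro i _; cases hai : astar i <;> simp [hai] <;> ring
    rw [Finset.prod_congr rfl hc, Finset.prod_const, Finset.card_univ, Fintype.card_fin]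
  rw [P1, P2, P3, P4] at h
  have gz : π z * u ^ hammingDist z astar = 0 := by rw [hπz]; ring
  have go : π o * u ^ hammingDist o astar = 0 := by rw [hπo]; ring
  rw [hAsum (fun a => π a * u ^ hammingDist a astar) gz go, h]
  have e3 : 1 + u = K / (K - 1) := by rw [hu]; field_simp; ring
  have e4 : t + t * u = -K / ((K - 1) * (K - 1)) := by rw [ht, hu]; field_simp; ring
  rw [e3, e4, div_pow, div_pow, hC, hlam, mul_pow]
  rw [div_pow]
  field_simp
  ring
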